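/- Let X be an n×d real matrix, M₂ a non-singular positive semi-definite n×n diagonal matrix with 𝕏̂ = XᵀM₂X, and Σ_D a positive semi-definite n×n matrix. Define the linear operator on d×d matrices S^lin_α(A) = (I − α𝕏̂)A(I − α𝕏̂) + α² · Xᵀ(Σ_D ⊙ (XAXᵀ))X. Fix a symmetric d×d matrix A with ker(X) ⊆ ker(A) and suppose 0 < α < min{1/‖𝕏̂‖, σ⁺min(𝕏̂)/(σ⁺min(𝕏̂)² + ‖X‖⁴·‖Σ_D‖)}. Then ‖S^lin_α(A)‖ ≤ (1 − α·σ⁺min(𝕏̂)) · ‖A‖ in spectral norm. -/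

import Mathlib

open Matrix MeasureTheory ProbabilityTheory Filter
open scoped BigOperators

noncomputable section

/-- Euclidean norm of a vector in `Fin n → ℝ`. -/
def l2norm {n : ℕ} (v : Fin n → ℝ) : ℝ := Real.sqrt (∑ i, (v i) ^ 2)

/-- Spectral norm (ℓ²-operator norm) of a real matrix. -/
def specNorm {m n : ℕ} (A : Matrix (Fin m) (Fin n) ℝ) : ℝ :=
  sSup {c : ℝ | ∃ v : Fin n → ℝ, l2norm v = 1 ∧ c = l2norm (A *ᵥ v)}

/-- The smallest non-zero singular value of a real matrix:
the infimum of all positive `s` such that `s ^ 2` is an eigenvalue of `AᵀA`. -/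
def sigmaMinPos {m n : ℕ} (A : Matrix (Fin m) (Fin n) ℝ) : ℝ :=
  sInf {s : ℝ | 0 < s ∧ ∃ v : Fin n → ℝ, v ≠ 0 ∧ (Aᵀ * A) *ᵥ v = (s ^ 2) • v}

/-- `B` is the Moore–Penrose pseudo-inverse of `A` (the four Penrose conditions). -/
def IsMoorePenrose {m n : ℕ} (A : Matrix (Fin m) (Fin n) ℝ)
    (B : Matrix (Fin n) (Fin m) ℝ) : Prop :=
  A * B * A = A ∧ B * A * B = B ∧ (A * B)ᵀ = A * B ∧ (B * A)ᵀ = B * A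

/-- `w` lies in the orthogonal complement of `ker A`. -/
def perpKer {m n : ℕ} (A : Matrix (Fin m) (Fin n) ℝ) (w : Fin n → ℝ) : Prop :=
  ∀ v : Fin n → ℝ, A *ᵥ v = 0 → w ⬝ᵥ v = 0

/-- Entrywise expectation of a random matrix. -/
def matExp {Ω : Type*} [MeasurableSpace Ω] (μ : Measure Ω) {m n : ℕ}
    (M : Ω → Matrix (Fin m) (Fin n) ℝ) : Matrix (Fin m) (Fin n) ℝ :=
  Matrix.of fun i j => ∫ ω, M ω i j ∂μ

/-- Entrywise expectation of a random vector. -/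
def vecExp {Ω : Type*} [MeasurableSpace Ω] (μ : Measure Ω) {n : ℕ}
    (v : Ω → Fin n → ℝ) : Fin n → ℝ :=
  fun i => ∫ ω, v ω i ∂μ

open scoped Matrix.Norms.L2Operator

lemma l2norm_eq {n : ℕ} (v : Fin n → ℝ) :
    l2norm v = ‖(WithLp.equiv 2 (Fin n → ℝ)).symm v‖ := by
  rw [EuclideanSpace.norm_eq, l2norm]
  congr 1
  refine Finset.sum_congr rfl fun i _ => ?_
  rw [WithLp.equiv_symm_apply, PiLp.toLp_apply, Real.norm_eq_abs, sq_abs]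

lemma l2norm_nonneg {n : ℕ} (v : Fin n → ℝ) : 0 ≤ l2norm v := Real.sqrt_nonneg _

lemma l2norm_mulVec_le {m n : ℕ} (A : Matrix (Fin m) (Fin n) ℝ) (v : Fin n → ℝ) :
    l2norm (A *ᵥ v) ≤ ‖A‖ * l2norm v := by
  rw [l2norm_eq, l2norm_eq]
  exact A.l2_opNorm_mulVec ((WithLp.equiv 2 (Fin n → ℝ)).symm v)

lemma specNorm_eq {m n : ℕ} (A : Matrix (Fin m) (Fin n) ℝ) : specNorm A = ‖A‖ := by
  classical
  set S := {c : ℝ | ∃ v : Fin n → ℝ, l2norm v = 1 ∧ c = l2norm (A *ᵥ v)} with hS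
  have hmem : ∀ c ∈ S, c ≤ ‖A‖ := by
    rintro c ⟨v, hv, rfl⟩
    simpa [hv] using l2norm_mulVec_le A v
  rcases Nat.eq_zero_or_pos n with hn | hn
  · subst hn
    have hA : A = 0 := by ext i j; exact j.elim0
    have hempty : S = ∅ := by
      ext c; simp only [hS, Set.mem_setOf_eq, Set.mem_empty_iff_false, iff_false]
      rintro ⟨v, hv, -⟩
      simp [l2norm] at hv
    rw [specNorm, ← hS, hempty, Real.sSup_empty, hA, norm_zero]
  · have hv₀ : l2norm (Pi.single (⟨0, hn⟩ : Fin n) (1:ℝ) : Fin n → ℝ) = 1 := by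
      rw [l2norm]
      have : ∑ i, ((Pi.single (⟨0, hn⟩ : Fin n) (1:ℝ) : Fin n → ℝ) i) ^ 2 = 1 := by
        rw [Finset.sum_eq_single (⟨0, hn⟩ : Fin n)]
        · simp
        · intro b _ hb; simp [Pi.single_apply, hb]
        · simp
      rw [this, Real.sqrt_one]
    have hSne : S.Nonempty := ⟨_, _, hv₀, rfl⟩
    have hbdd : BddAbove S := ⟨‖A‖, hmem⟩
    have hsup0 : 0 ≤ sSup S := Real.sSup_nonneg (by rintro c ⟨v, hv, rfl⟩; exact l2norm_nonneg _)
    refine le_antisymm (csSup_le hSne hmem) ?_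
    rw [Matrix.l2_opNorm_def]
    refine ContinuousLinearMap.opNorm_le_bound _ hsup0 fun x => ?_
    rcases eq_or_ne x 0 with rfl | hx
    · simp
    · have hxn : ‖x‖ ≠ 0 := norm_ne_zero_iff.mpr hx
      set u : EuclideanSpace ℝ (Fin n) := ‖x‖⁻¹ • x with hu
      have hun : ‖u‖ = 1 := by
        rw [hu, norm_smul, norm_inv, norm_norm, inv_mul_cancel₀ hxn]
      set f := (Matrix.toEuclideanLin.trans LinearMap.toContinuousLinearMap) A with hf
      have hfm : ∀ y : EuclideanSpace ℝ (Fin n),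
          ‖f y‖ = l2norm (A *ᵥ (WithLp.equiv 2 (Fin n → ℝ) y)) := by
        intro y
        rw [l2norm_eq]
        exact congrArg norm (Matrix.toEuclideanLin_apply A y)
      have hmemu : ‖f u‖ ∈ S := by
        refine ⟨WithLp.equiv 2 (Fin n → ℝ) u, ?_, ?_⟩
        · rw [l2norm_eq]; simpa using hun
        · exact hfm u
      have hux : x = ‖x‖ • u := by rw [hu, smul_smul, mul_inv_cancel₀ hxn, one_smul]
      calc ‖f x‖ = ‖f (‖x‖ • u)‖ := by rw [← hux]
          _ = ‖x‖ * ‖f u‖ := by rw [_root_.map_smul, norm_smul, norm_norm]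
          _ ≤ ‖x‖ * sSup S := by
            exact mul_le_mul_of_nonneg_left (le_csSup hbdd hmemu) (norm_nonneg x)
          _ = sSup S * ‖x‖ := mul_comm _ _

lemma my_norm_diagonal_le {k : ℕ} (w : Fin k → ℝ) (c : ℝ) (hc : 0 ≤ c)
    (hw : ∀ i, |w i| ≤ c) : ‖(Matrix.diagonal w : Matrix (Fin k) (Fin k) ℝ)‖ ≤ c := by
  rw [Matrix.l2_opNorm_def]
  refine ContinuousLinearMap.opNorm_le_bound _ hc fun x => ?_
  have h1 : (Matrix.toEuclideanLin.trans LinearMap.toContinuousLinearMap)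
      (Matrix.diagonal w) x
      = (WithLp.equiv 2 (Fin k → ℝ)).symm
        (Matrix.diagonal w *ᵥ (WithLp.equiv 2 (Fin k → ℝ)) x) :=
    Matrix.toEuclideanLin_apply _ x
  rw [h1, EuclideanSpace.norm_eq, EuclideanSpace.norm_eq]
  have h2 : ∀ i, ‖(WithLp.equiv 2 (Fin k → ℝ)).symm
      (Matrix.diagonal w *ᵥ (WithLp.equiv 2 (Fin k → ℝ)) x) i‖ ^ 2
      = (w i * x i) ^ 2 := by
    intro i
    rw [WithLp.equiv_symm_apply, PiLp.toLp_apply, Matrix.mulVec_diagonal, Real.norm_eq_abs, sq_abs]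
    rfl
  calc Real.sqrt (∑ i, ‖(WithLp.equiv 2 (Fin k → ℝ)).symm
          (Matrix.diagonal w *ᵥ (WithLp.equiv 2 (Fin k → ℝ)) x) i‖ ^ 2)
      = Real.sqrt (∑ i, (w i * x i) ^ 2) := by
        congr 1; exact Finset.sum_congr rfl fun i _ => h2 i
    _ ≤ Real.sqrt (∑ i, c ^ 2 * x i ^ 2) := by
        apply Real.sqrt_le_sqrt
        refine Finset.sum_le_sum fun i _ => ?_
        rw [mul_pow]
        have : (w i) ^ 2 ≤ c ^ 2 := by
          rw [← sq_abs (w i)]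
          exact pow_le_pow_left₀ (abs_nonneg _) (hw i) 2
        nlinarith [sq_nonneg (x i)]
    _ = c * Real.sqrt (∑ i, x i ^ 2) := by
        rw [← Finset.mul_sum, Real.sqrt_mul (sq_nonneg c), Real.sqrt_sq hc]
    _ = c * Real.sqrt (∑ i, ‖x i‖ ^ 2) := by
        congr 2; exact Finset.sum_congr rfl fun i _ => by
          rw [Real.norm_eq_abs, sq_abs]

lemma my_norm_one_le {k : ℕ} : ‖(1 : Matrix (Fin k) (Fin k) ℝ)‖ ≤ 1 := by
  rw [← Matrix.diagonal_one]
  exact my_norm_diagonal_le _ 1 zero_le_one fun i => by simp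

lemma my_conjT_eq {k l : ℕ} (U : Matrix (Fin k) (Fin l) ℝ) : Uᴴ = Uᵀ :=
  Matrix.conjTranspose_eq_transpose_of_trivial U

lemma my_norm_unit_le {k : ℕ} (U : Matrix (Fin k) (Fin k) ℝ) (hU : Uᵀ * U = 1) :
    ‖U‖ ≤ 1 := by
  have h := Matrix.l2_opNorm_conjTranspose_mul_self U
  rw [my_conjT_eq, hU] at h
  nlinarith [norm_nonneg U, my_norm_one_le (k := k)]

lemma my_norm_mul3_le {k : ℕ} (P M Q : Matrix (Fin k) (Fin k) ℝ) :
    ‖P * M * Q‖ ≤ ‖P‖ * ‖M‖ * ‖Q‖ := by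
  calc ‖P * M * Q‖ ≤ ‖P * M‖ * ‖Q‖ := Matrix.l2_opNorm_mul _ _
    _ ≤ ‖P‖ * ‖M‖ * ‖Q‖ :=
        mul_le_mul_of_nonneg_right (Matrix.l2_opNorm_mul _ _) (norm_nonneg _)

lemma my_norm_conj_le {k : ℕ} (U M : Matrix (Fin k) (Fin k) ℝ)
    (h1 : Uᵀ * U = 1) (h2 : U * Uᵀ = 1) : ‖U * M * Uᵀ‖ ≤ ‖M‖ := by
  have hU : ‖U‖ ≤ 1 := my_norm_unit_le U h1
  have hUt : ‖Uᵀ‖ ≤ 1 := my_norm_unit_le Uᵀ (by rw [Matrix.transpose_transpose]; exact h2)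
  calc ‖U * M * Uᵀ‖ ≤ ‖U‖ * ‖M‖ * ‖Uᵀ‖ := my_norm_mul3_le _ _ _
    _ ≤ 1 * ‖M‖ * 1 := by
        exact mul_le_mul (mul_le_mul hU le_rfl (norm_nonneg _) zero_le_one) hUt
          (norm_nonneg _) (by positivity)
    _ = ‖M‖ := by ring

lemma my_norm_conj_eq {k : ℕ} (U M : Matrix (Fin k) (Fin k) ℝ)
    (h1 : Uᵀ * U = 1) (h2 : U * Uᵀ = 1) : ‖U * M * Uᵀ‖ = ‖M‖ := by
  refine le_antisymm (my_norm_conj_le U M h1 h2) ?_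
  have key : Uᵀ * (U * M * Uᵀ) * (Uᵀ)ᵀ = M := by
    rw [Matrix.transpose_transpose]
    calc Uᵀ * (U * M * Uᵀ) * U = Uᵀ * U * (M * (Uᵀ * U)) := by
          simp only [Matrix.mul_assoc]
      _ = M := by rw [h1, one_mul, mul_one]
  calc ‖M‖ = ‖Uᵀ * (U * M * Uᵀ) * (Uᵀ)ᵀ‖ := by rw [key]
    _ ≤ ‖U * M * Uᵀ‖ := my_norm_conj_le Uᵀ _
        (by rw [Matrix.transpose_transpose]; exact h2)
        (by rw [Matrix.transpose_transpose]; exact h1)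

lemma my_dot_eq_inner {k : ℕ} (x y : Fin k → ℝ) :
    x ⬝ᵥ y = inner ℝ ((WithLp.equiv 2 (Fin k → ℝ)).symm x)
      ((WithLp.equiv 2 (Fin k → ℝ)).symm y) := by
  rw [PiLp.inner_apply]
  simp [dotProduct, mul_comm]

lemma my_dot_self_eq {k : ℕ} (x : Fin k → ℝ) :
    x ⬝ᵥ x = ‖(WithLp.equiv 2 (Fin k → ℝ)).symm x‖ ^ 2 := by
  rw [my_dot_eq_inner, real_inner_self_eq_norm_sq]

lemma my_quad_abs_le {k : ℕ} (M : Matrix (Fin k) (Fin k) ℝ) (v : Fin k → ℝ) :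
    |v ⬝ᵥ (M *ᵥ v)| ≤ ‖M‖ * (v ⬝ᵥ v) := by
  set vE := (WithLp.equiv 2 (Fin k → ℝ)).symm v with hvE
  have h1 : v ⬝ᵥ (M *ᵥ v) = inner ℝ vE ((WithLp.equiv 2 (Fin k → ℝ)).symm (M *ᵥ v)) :=
    my_dot_eq_inner _ _
  calc |v ⬝ᵥ (M *ᵥ v)| ≤ ‖vE‖ * ‖(WithLp.equiv 2 (Fin k → ℝ)).symm (M *ᵥ v)‖ := by
        rw [h1]; exact abs_real_inner_le_norm _ _
    _ ≤ ‖vE‖ * (‖M‖ * ‖vE‖) :=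
        mul_le_mul_of_nonneg_left (M.l2_opNorm_mulVec vE) (norm_nonneg _)
    _ = ‖M‖ * (v ⬝ᵥ v) := by rw [my_dot_self_eq]; ring

lemma my_norm_le_of_quad {k : ℕ} (M : Matrix (Fin k) (Fin k) ℝ) (hM : M.IsHermitian)
    (b : ℝ) (hb : 0 ≤ b) (h : ∀ v : Fin k → ℝ, |v ⬝ᵥ (M *ᵥ v)| ≤ b * (v ⬝ᵥ v)) :
    ‖M‖ ≤ b := by
  classical
  have hsp := hM.spectral_theorem
  set U : Matrix (Fin k) (Fin k) ℝ := (hM.eigenvectorUnitary : Matrix (Fin k) (Fin k) ℝ)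
    with hUdef
  have hstar : star U = Uᵀ := by
    rw [Matrix.star_eq_conjTranspose, my_conjT_eq]
  have h1 : Uᵀ * U = 1 := by
    rw [← hstar]; exact (Unitary.mem_iff.mp hM.eigenvectorUnitary.2).1
  have h2 : U * Uᵀ = 1 := by
    rw [← hstar]; exact (Unitary.mem_iff.mp hM.eigenvectorUnitary.2).2
  have hD : Matrix.diagonal (RCLike.ofReal ∘ hM.eigenvalues)
      = Matrix.diagonal hM.eigenvalues := by
    simp [RCLike.ofReal_real_eq_id]
  have hMnorm : ‖M‖ = ‖(Matrix.diagonal hM.eigenvalues : Matrix (Fin k) (Fin k) ℝ)‖ := by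
    conv_lhs => rw [hsp]
    rw [Unitary.conjStarAlgAut_apply, hD, hstar]
    exact my_norm_conj_eq U _ h1 h2
  rw [hMnorm]
  refine my_norm_diagonal_le _ b hb fun i => ?_
  have hev := hM.mulVec_eigenvectorBasis i
  have hunit : (⇑(hM.eigenvectorBasis i) : Fin k → ℝ) ⬝ᵥ ⇑(hM.eigenvectorBasis i) = 1 := by
    have hn : ‖hM.eigenvectorBasis i‖ = 1 := hM.eigenvectorBasis.orthonormal.1 i
    have := my_dot_self_eq (⇑(hM.eigenvectorBasis i) : Fin k → ℝ)
    rw [this]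
    have : (WithLp.equiv 2 (Fin k → ℝ)).symm (⇑(hM.eigenvectorBasis i)) =
        hM.eigenvectorBasis i := rfl
    rw [this, hn, one_pow]
  have hq := h (⇑(hM.eigenvectorBasis i) : Fin k → ℝ)
  rw [hev] at hq
  have : (⇑(hM.eigenvectorBasis i) : Fin k → ℝ) ⬝ᵥ
      (hM.eigenvalues i • ⇑(hM.eigenvectorBasis i)) = hM.eigenvalues i := by
    rw [dotProduct_smul, smul_eq_mul, hunit, mul_one]
  rw [this, hunit, mul_one] at hq
  exact hq

lemma my_schur {k : ℕ} (P Q : Matrix (Fin k) (Fin k) ℝ) (hP : P.PosSemidef)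
    (hQ : Q.PosSemidef) : (Matrix.hadamard P Q).PosSemidef := by
  obtain ⟨B, hB⟩ : ∃ B : Matrix (Fin k) (Fin k) ℝ, Q = Bᴴ * B := by
    open scoped MatrixOrder in exact CStarAlgebra.nonneg_iff_eq_star_mul_self.mp hQ.nonneg
  refine Matrix.PosSemidef.of_dotProduct_mulVec_nonneg ?_ ?_
  · have : (Matrix.hadamard P Q)ᴴ = Matrix.hadamard Pᴴ Qᴴ := by
      ext i j; simp [Matrix.conjTranspose_apply, Matrix.hadamard_apply]
    rw [Matrix.IsHermitian, this, hP.1, hQ.1]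
  · intro x
    have hQij : ∀ i j, Q i j = ∑ t, B t i * B t j := by
      intro i j
      rw [hB]
      simp [Matrix.mul_apply, Matrix.conjTranspose_apply]
    set F : Fin k → Fin k → Fin k → ℝ :=
      fun i j t => (B t i * x i) * (P i j * (B t j * x j)) with hF
    have key : dotProduct (star x) ((Matrix.hadamard P Q) *ᵥ x)
        = ∑ t, dotProduct (star (fun i => B t i * x i))
            (P *ᵥ fun i => B t i * x i) := by
      have lhs : dotProduct (star x) ((Matrix.hadamard P Q) *ᵥ x)
          = ∑ i, ∑ j, ∑ t, F i j t := by
        simp only [star_trivial, dotProduct, Matrix.mulVec, Matrix.hadamard_apply, hQij,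
          Finset.mul_sum, Finset.sum_mul]
        refine Finset.sum_congr rfl fun i _ => Finset.sum_congr rfl fun j _ =>
          Finset.sum_congr rfl fun t _ => ?_
        rw [hF]; ring
      have rhs : (∑ t, dotProduct (star (fun i => B t i * x i))
            (P *ᵥ fun i => B t i * x i))
          = ∑ t, ∑ i, ∑ j, F i j t := by
        refine Finset.sum_congr rfl fun t _ => ?_
        simp only [star_trivial, dotProduct, Matrix.mulVec,
          Finset.mul_sum, Finset.sum_mul]
        rfl
      calc dotProduct (star x) ((Matrix.hadamard P Q) *ᵥ x)
          = ∑ i, ∑ j, ∑ t, F i j t := lhs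
        _ = ∑ i, ∑ t, ∑ j, F i j t :=
            Finset.sum_congr rfl fun i _ => Finset.sum_comm
        _ = ∑ t, ∑ i, ∑ j, F i j t := Finset.sum_comm
        _ = _ := rhs.symm
    rw [key]
    exact Finset.sum_nonneg fun t _ => hP.dotProduct_mulVec_nonneg _

lemma my_hadamard_herm {k : ℕ} (S M : Matrix (Fin k) (Fin k) ℝ) (hS : S.IsHermitian)
    (hM : M.IsHermitian) : (Matrix.hadamard S M).IsHermitian := by
  have h1 : Sᴴ = S := hS
  have h2 : Mᴴ = M := hM
  show (Matrix.hadamard S M)ᴴ = _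
  ext i j
  have e1 : S j i = S i j := by
    conv_lhs => rw [← h1]
    simp [Matrix.conjTranspose_apply]
  have e2 : M j i = M i j := by
    conv_lhs => rw [← h2]
    simp [Matrix.conjTranspose_apply]
  simp [Matrix.conjTranspose_apply, Matrix.hadamard_apply, e1, e2]

lemma my_diag_le_norm {k : ℕ} (S : Matrix (Fin k) (Fin k) ℝ) (i : Fin k) :
    S i i ≤ ‖S‖ := by
  have h := my_quad_abs_le S (Pi.single i (1:ℝ))
  have h1 : (Pi.single i (1:ℝ) : Fin k → ℝ) ⬝ᵥ (S *ᵥ (Pi.single i (1:ℝ) : Fin k → ℝ))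
      = S i i := by
    rw [Matrix.mulVec_single]
    simp [dotProduct, Pi.single_apply]
  have h2 : (Pi.single i (1:ℝ) : Fin k → ℝ) ⬝ᵥ (Pi.single i (1:ℝ) : Fin k → ℝ) = 1 := by
    simp [dotProduct, Pi.single_apply]
  rw [h1, h2, mul_one] at h
  exact (le_abs_self _).trans h

lemma my_hadamard_norm_le {k : ℕ} (S M : Matrix (Fin k) (Fin k) ℝ) (hS : S.PosSemidef)
    (hM : M.IsHermitian) : ‖Matrix.hadamard S M‖ ≤ ‖S‖ * ‖M‖ := by
  set c := ‖M‖ with hc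
  have hc0 : 0 ≤ c := norm_nonneg _
  have hb : 0 ≤ ‖S‖ * c := mul_nonneg (norm_nonneg _) hc0
  have hIherm : ((c • (1:Matrix (Fin k) (Fin k) ℝ))).IsHermitian := by
    show _ᴴ = _
    rw [Matrix.conjTranspose_smul, Matrix.conjTranspose_one]
    simp
  have hquadId : ∀ x : Fin k → ℝ,
      x ⬝ᵥ ((c • (1:Matrix (Fin k) (Fin k) ℝ)) *ᵥ x) = c * (x ⬝ᵥ x) := by
    intro x
    rw [Matrix.smul_mulVec, Matrix.one_mulVec, dotProduct_smul, smul_eq_mul]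
  have hplus : (c • (1:Matrix (Fin k) (Fin k) ℝ) + M).PosSemidef := by
    refine Matrix.PosSemidef.of_dotProduct_mulVec_nonneg (hIherm.add hM) fun x => ?_
    rw [star_trivial, Matrix.add_mulVec, dotProduct_add, hquadId]
    have := (abs_le.mp (my_quad_abs_le M x)).1
    rw [← hc] at this
    linarith
  have hminus : (c • (1:Matrix (Fin k) (Fin k) ℝ) - M).PosSemidef := by
    refine Matrix.PosSemidef.of_dotProduct_mulVec_nonneg (hIherm.sub hM) fun x => ?_
    rw [star_trivial, Matrix.sub_mulVec, dotProduct_sub, hquadId]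
    have := (abs_le.mp (my_quad_abs_le M x)).2
    rw [← hc] at this
    linarith
  have hhadd : ∀ (N : Matrix (Fin k) (Fin k) ℝ),
      Matrix.hadamard S (c • (1:Matrix (Fin k) (Fin k) ℝ)) =
        c • Matrix.diagonal (fun i => S i i) := by
    intro _
    rw [Matrix.hadamard_smul, Matrix.hadamard_one]
    rfl
  have hquadD : ∀ x : Fin k → ℝ,
      x ⬝ᵥ ((c • Matrix.diagonal (fun i => S i i)) *ᵥ x) ≤ ‖S‖ * c * (x ⬝ᵥ x) := by
    intro x
    rw [Matrix.smul_mulVec, dotProduct_smul, smul_eq_mul]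
    have hsum : x ⬝ᵥ (Matrix.diagonal (fun i => S i i) *ᵥ x) ≤ ‖S‖ * (x ⬝ᵥ x) := by
      simp only [dotProduct, Matrix.mulVec_diagonal, Finset.mul_sum]
      refine Finset.sum_le_sum fun i _ => ?_
      have h1 : S i i ≤ ‖S‖ := my_diag_le_norm S i
      nlinarith [sq_nonneg (x i)]
    calc c * (x ⬝ᵥ (Matrix.diagonal (fun i => S i i) *ᵥ x)) ≤ c * (‖S‖ * (x ⬝ᵥ x)) :=
          mul_le_mul_of_nonneg_left hsum hc0
      _ = ‖S‖ * c * (x ⬝ᵥ x) := by ring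
  refine my_norm_le_of_quad _ (my_hadamard_herm S M hS.1 hM) _ hb fun x => ?_
  rw [abs_le]
  have hp := (my_schur S _ hS hplus).dotProduct_mulVec_nonneg x
  have hm := (my_schur S _ hS hminus).dotProduct_mulVec_nonneg x
  have hexp : Matrix.hadamard S (c • (1:Matrix (Fin k) (Fin k) ℝ) + M)
      = c • Matrix.diagonal (fun i => S i i) + Matrix.hadamard S M := by
    rw [Matrix.hadamard_add, hhadd M]
  have hexm : Matrix.hadamard S (c • (1:Matrix (Fin k) (Fin k) ℝ) - M)
      = c • Matrix.diagonal (fun i => S i i) - Matrix.hadamard S M := by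
    have : (c • (1:Matrix (Fin k) (Fin k) ℝ) - M)
        = c • (1:Matrix (Fin k) (Fin k) ℝ) + (-M) := sub_eq_add_neg _ _
    rw [this, Matrix.hadamard_add, hhadd M]
    have hneg : Matrix.hadamard S (-M) = -(Matrix.hadamard S M) := by
      ext i j; simp [Matrix.hadamard_apply]
    rw [hneg, ← sub_eq_add_neg]
  rw [star_trivial, hexp, Matrix.add_mulVec, dotProduct_add] at hp
  rw [star_trivial, hexm, Matrix.sub_mulVec, dotProduct_sub] at hm
  have hD := hquadD x
  constructor
  · linarith
  · linarith

lemma my_core {k : ℕ} (W A : Matrix (Fin k) (Fin k) ℝ) (hW : W.IsHermitian)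
    (hA : A.IsHermitian) (hker : ∀ v : Fin k → ℝ, W *ᵥ v = 0 → A *ᵥ v = 0)
    (α σ : ℝ) (hα : 0 ≤ α) (hσ1 : α * σ ≤ 1)
    (hlam : ∀ (v : Fin k → ℝ), v ≠ 0 → ∀ lam : ℝ, W *ᵥ v = lam • v → lam ≠ 0 →
      (σ ≤ lam ∧ α * lam ≤ 1)) :
    ‖((1 : Matrix (Fin k) (Fin k) ℝ) - α • W) * A
      * ((1 : Matrix (Fin k) (Fin k) ℝ) - α • W)‖ ≤ (1 - α * σ)^2 * ‖A‖ := by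
  classical
  have hg : 0 ≤ 1 - α * σ := by linarith
  set U : Matrix (Fin k) (Fin k) ℝ := (hW.eigenvectorUnitary : Matrix (Fin k) (Fin k) ℝ)
    with hUdef
  set μ : Fin k → ℝ := hW.eigenvalues with hμdef
  have hstar : star U = Uᵀ := by rw [Matrix.star_eq_conjTranspose, my_conjT_eq]
  have h1 : Uᵀ * U = 1 := by
    rw [← hstar]; exact (Unitary.mem_iff.mp hW.eigenvectorUnitary.2).1
  have h2 : U * Uᵀ = 1 := by
    rw [← hstar]; exact (Unitary.mem_iff.mp hW.eigenvectorUnitary.2).2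
  have hsp : W = U * Matrix.diagonal μ * Uᵀ := by
    have := hW.spectral_theorem
    rw [Unitary.conjStarAlgAut_apply, hstar] at this
    convert this using 2
    · rfl
    · simp [hμdef, RCLike.ofReal_real_eq_id]
      rfl
  set C : Matrix (Fin k) (Fin k) ℝ := Uᵀ * A * U with hCdef
  have hCnorm : ‖C‖ = ‖A‖ := by
    rw [hCdef, show U = (Uᵀ)ᵀ from (Matrix.transpose_transpose U).symm]
    rw [Matrix.transpose_transpose]
    exact my_norm_conj_eq Uᵀ A
      (by rw [Matrix.transpose_transpose]; exact h2)
      (by rw [Matrix.transpose_transpose]; exact h1)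
  have hCherm : C.IsHermitian := by
    show Cᴴ = C
    rw [hCdef, my_conjT_eq]
    rw [Matrix.transpose_mul, Matrix.transpose_mul, Matrix.transpose_transpose]
    have : Aᵀ = A := by rw [← my_conjT_eq]; exact hA
    rw [this, Matrix.mul_assoc]
  have hCcol : ∀ i, μ i = 0 → ∀ j, C j i = 0 := by
    intro i hi j
    have hv : W *ᵥ ⇑(hW.eigenvectorBasis i) = 0 := by
      rw [hW.mulVec_eigenvectorBasis, ← hμdef, hi, zero_smul]
    have hAv : A *ᵥ ⇑(hW.eigenvectorBasis i) = 0 := hker _ hv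
    have hUs : U *ᵥ Pi.single i 1 = ⇑(hW.eigenvectorBasis i) := by
      rw [hUdef]; exact hW.eigenvectorUnitary_mulVec i
    have hcol : C *ᵥ Pi.single i 1 = 0 := by
      rw [hCdef, ← Matrix.mulVec_mulVec, hUs, ← Matrix.mulVec_mulVec, hAv,
        Matrix.mulVec_zero]
    have := congrFun hcol j
    simpa [Matrix.mulVec_single] using this
  have hCrow : ∀ i, μ i = 0 → ∀ j, C i j = 0 := by
    intro i hi j
    have hsymm : C i j = C j i := by
      conv_lhs => rw [← hCherm]
      simp [Matrix.conjTranspose_apply]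
    rw [hsymm]
    exact hCcol i hi j
  set E : Matrix (Fin k) (Fin k) ℝ :=
    Matrix.diagonal (fun i => if μ i = 0 then 0 else 1 - α * μ i) with hEdef
  have hDdiag : (1 : Matrix (Fin k) (Fin k) ℝ) - α • Matrix.diagonal μ
      = Matrix.diagonal (fun i => 1 - α * μ i) := by
    rw [← Matrix.diagonal_one, ← Matrix.diagonal_smul, ← Matrix.diagonal_sub]
    rfl
  have hEC : ((1 : Matrix (Fin k) (Fin k) ℝ) - α • Matrix.diagonal μ) * C
      * ((1 : Matrix (Fin k) (Fin k) ℝ) - α • Matrix.diagonal μ) = E * C * E := by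
    rw [hDdiag, hEdef]
    ext i j
    simp only [Matrix.mul_diagonal, Matrix.diagonal_mul]
    by_cases hi : μ i = 0
    · rw [hCrow i hi j]; simp
    · by_cases hj : μ j = 0
      · rw [hCcol j hj i]; simp
      · simp [hi, hj]
  have hnormE : ‖E‖ ≤ 1 - α * σ := by
    rw [hEdef]
    refine my_norm_diagonal_le _ _ hg fun i => ?_
    by_cases hi : μ i = 0
    · simp [hi, hg]
    · simp only [hi, if_false]
      have hvne : (⇑(hW.eigenvectorBasis i) : Fin k → ℝ) ≠ 0 := by
        intro h0
        have hn : ‖hW.eigenvectorBasis i‖ = 1 := hW.eigenvectorBasis.orthonormal.1 i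
        have he : l2norm (⇑(hW.eigenvectorBasis i) : Fin k → ℝ) = 1 := by
          rw [l2norm_eq]; exact hn
        rw [h0] at he
        simp [l2norm] at he
      obtain ⟨hσle, hαle⟩ := hlam _ hvne (μ i)
        (by rw [hW.mulVec_eigenvectorBasis]) hi
      rw [abs_le]
      constructor
      · nlinarith
      · nlinarith
  have hW' : (1 : Matrix (Fin k) (Fin k) ℝ) - α • W
      = U * ((1 : Matrix (Fin k) (Fin k) ℝ) - α • Matrix.diagonal μ) * Uᵀ := by
    rw [Matrix.mul_sub, Matrix.sub_mul, Matrix.mul_one, h2]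
    rw [Matrix.mul_smul, Matrix.smul_mul]
    rw [← hsp]
  have hfact : ((1 : Matrix (Fin k) (Fin k) ℝ) - α • W) * A
      * ((1 : Matrix (Fin k) (Fin k) ℝ) - α • W)
      = U * (((1 : Matrix (Fin k) (Fin k) ℝ) - α • Matrix.diagonal μ) * C
          * ((1 : Matrix (Fin k) (Fin k) ℝ) - α • Matrix.diagonal μ)) * Uᵀ := by
    rw [hW', hCdef]
    simp only [Matrix.mul_assoc]
  rw [hfact, hEC]
  rw [my_norm_conj_eq U _ h1 h2]
  calc ‖E * C * E‖ ≤ ‖E‖ * ‖C‖ * ‖E‖ := my_norm_mul3_le _ _ _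
    _ ≤ (1 - α * σ) ^ 2 * ‖A‖ := by
        rw [← hCnorm]
        nlinarith [mul_le_mul_of_nonneg_right
          (mul_le_mul hnormE hnormE (norm_nonneg E) hg) (norm_nonneg C)]

lemma my_l2norm_pos {k : ℕ} (v : Fin k → ℝ) (hv : v ≠ 0) : 0 < l2norm v := by
  rw [l2norm, Real.sqrt_pos]
  obtain ⟨i, hi⟩ := Function.ne_iff.mp hv
  exact Finset.sum_pos' (fun j _ => sq_nonneg _)
    ⟨i, Finset.mem_univ i, lt_of_le_of_ne (sq_nonneg _) (Ne.symm (pow_ne_zero 2 hi))⟩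

lemma my_l2norm_smul {k : ℕ} (c : ℝ) (v : Fin k → ℝ) :
    l2norm (c • v) = |c| * l2norm v := by
  rw [l2norm_eq, l2norm_eq]
  have : (WithLp.equiv 2 (Fin k → ℝ)).symm (c • v)
      = c • (WithLp.equiv 2 (Fin k → ℝ)).symm v := rfl
  rw [this, norm_smul, Real.norm_eq_abs]

lemma my_dot_self_pos {k : ℕ} (v : Fin k → ℝ) (hv : v ≠ 0) : 0 < v ⬝ᵥ v := by
  have h1 : v ⬝ᵥ v = ∑ i, v i ^ 2 := by
    simp [dotProduct, sq]
  rw [h1]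
  obtain ⟨i, hi⟩ := Function.ne_iff.mp hv
  exact Finset.sum_pos' (fun j _ => sq_nonneg _)
    ⟨i, Finset.mem_univ i, lt_of_le_of_ne (sq_nonneg _) (Ne.symm (pow_ne_zero 2 hi))⟩

/-- Lemma 5: contraction of the linear part `S^lin_α`.
For a symmetric matrix `A` with `ker X ⊆ ker A` and small enough `α > 0`,
`‖S^lin_α(A)‖ ≤ (1 - α σ⁺min(𝕏̂)) ‖A‖` in spectral norm, where
`S^lin_α(A) = (I-α𝕏̂)A(I-α𝕏̂) + α² Xᵀ(Σ_D ⊙ (XAXᵀ))X` and `𝕏̂ = XᵀM₂X`. -/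
theorem randomly_weighted_gd_stmt8 {n d : ℕ}
    (X : Matrix (Fin n) (Fin d) ℝ)
    (M2 : Matrix (Fin n) (Fin n) ℝ)
    (hM2diag : M2.IsDiag) (hM2psd : M2.PosSemidef) (hM2unit : IsUnit M2.det)
    (SD : Matrix (Fin n) (Fin n) ℝ) (hSDpsd : SD.PosSemidef)
    (A : Matrix (Fin d) (Fin d) ℝ) (hAsymm : A.IsSymm)
    (hAker : ∀ v : Fin d → ℝ, X *ᵥ v = 0 → A *ᵥ v = 0)
    (α : ℝ) (hα0 : 0 < α)
    (hα1 : α * specNorm (Xᵀ * M2 * X) < 1)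
    (hα2 : α * (sigmaMinPos (Xᵀ * M2 * X) ^ 2 + specNorm X ^ 4 * specNorm SD)
        < sigmaMinPos (Xᵀ * M2 * X)) :
    specNorm (((1 : Matrix (Fin d) (Fin d) ℝ) - α • (Xᵀ * M2 * X)) * A
          * ((1 : Matrix (Fin d) (Fin d) ℝ) - α • (Xᵀ * M2 * X))
        + α ^ 2 • (Xᵀ * Matrix.hadamard SD (X * A * Xᵀ) * X))
      ≤ (1 - α * sigmaMinPos (Xᵀ * M2 * X)) * specNorm A := by
  classical
  set W : Matrix (Fin d) (Fin d) ℝ := Xᵀ * M2 * X with hWdef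
  have hWpsd : W.PosSemidef := by
    rw [hWdef, ← my_conjT_eq]
    exact hM2psd.conjTranspose_mul_mul_same X
  have hWherm : W.IsHermitian := hWpsd.1
  have hAherm : A.IsHermitian := by
    rw [Matrix.IsHermitian, my_conjT_eq]; exact hAsymm
  have hkerX : ∀ v : Fin d → ℝ, W *ᵥ v = 0 → X *ᵥ v = 0 := by
    intro v hv
    set w := X *ᵥ v with hw
    have hMw : Xᵀ *ᵥ (M2 *ᵥ w) = 0 := by
      rw [hw, Matrix.mulVec_mulVec, Matrix.mulVec_mulVec]
      exact hv
    have hq : w ⬝ᵥ (M2 *ᵥ w) = 0 := by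
      have h0 : v ⬝ᵥ (Xᵀ *ᵥ (M2 *ᵥ w)) = 0 := by rw [hMw, dotProduct_zero]
      rwa [dotProduct_mulVec, Matrix.vecMul_transpose, ← hw] at h0
    obtain ⟨B, hB⟩ : ∃ B : Matrix (Fin n) (Fin n) ℝ, M2 = Bᴴ * B := by
      open scoped MatrixOrder in exact CStarAlgebra.nonneg_iff_eq_star_mul_self.mp hM2psd.nonneg
    have hBw : B *ᵥ w = 0 := by
      have h1 : (B *ᵥ w) ⬝ᵥ (B *ᵥ w) = 0 := by
        rw [hB, ← Matrix.mulVec_mulVec] at hq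
        rw [dotProduct_mulVec w, my_conjT_eq, Matrix.vecMul_transpose] at hq
        exact hq
      by_contra hne
      exact (my_dot_self_pos _ hne).ne' h1
    have hM2w : M2 *ᵥ w = 0 := by
      rw [hB, ← Matrix.mulVec_mulVec, hBw, Matrix.mulVec_zero]
    have hM2inv := Matrix.nonsing_inv_mul M2 hM2unit
    calc w = (M2⁻¹ * M2) *ᵥ w := by rw [hM2inv, Matrix.one_mulVec]
      _ = M2⁻¹ *ᵥ (M2 *ᵥ w) := (Matrix.mulVec_mulVec _ _ _).symm
      _ = 0 := by rw [hM2w, Matrix.mulVec_zero]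
  have hkerA : ∀ v : Fin d → ℝ, W *ᵥ v = 0 → A *ᵥ v = 0 :=
    fun v hv => hAker v (hkerX v hv)
  set σ := sigmaMinPos W with hσdef
  have hσ0 : 0 ≤ σ := Real.sInf_nonneg (by rintro s ⟨hs, -⟩; exact hs.le)
  have hK0 : 0 ≤ specNorm X ^ 4 * specNorm SD := by
    rw [specNorm_eq, specNorm_eq]; positivity
  have hσpos : 0 < σ := by nlinarith
  have hασ : α * σ < 1 := by nlinarith
  have hlam : ∀ v : Fin d → ℝ, v ≠ 0 → ∀ lam : ℝ, W *ᵥ v = lam • v → lam ≠ 0 →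
      σ ≤ lam ∧ α * lam ≤ 1 := by
    intro v hv lam hWv hlne
    have hvv := my_dot_self_pos v hv
    have hlam0 : 0 < lam := by
      have h0 : 0 ≤ v ⬝ᵥ (W *ᵥ v) := by
        have := hWpsd.dotProduct_mulVec_nonneg v; rwa [star_trivial] at this
      rw [hWv, dotProduct_smul, smul_eq_mul] at h0
      rcases lt_trichotomy lam 0 with h | h | h
      · nlinarith
      · exact absurd h hlne
      · exact h
    constructor
    · have hWt : Wᵀ = W := by rw [← my_conjT_eq]; exact hWherm
      have hmem : lam ∈ {s : ℝ | 0 < s ∧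
          ∃ u : Fin d → ℝ, u ≠ 0 ∧ (Wᵀ * W) *ᵥ u = (s ^ 2) • u} := by
        refine ⟨hlam0, v, hv, ?_⟩
        rw [hWt, ← Matrix.mulVec_mulVec, hWv, Matrix.mulVec_smul, hWv, smul_smul, sq]
      exact csInf_le ⟨0, fun s hs => hs.1.le⟩ hmem
    · have hl2 : |lam| * l2norm v ≤ ‖W‖ * l2norm v := by
        rw [← my_l2norm_smul, ← hWv]; exact l2norm_mulVec_le W v
      have hlv : 0 < l2norm v := my_l2norm_pos v hv
      have hlamW : lam ≤ ‖W‖ :=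
        (le_abs_self lam).trans ((mul_le_mul_iff_left₀ hlv).mp hl2)
      have hαW : α * ‖W‖ < 1 := by rw [← specNorm_eq]; exact hα1
      nlinarith
  have hcore := my_core W A hWherm hAherm hkerA α σ hα0.le hασ.le hlam
  have hXAXt : (X * A * Xᵀ).IsHermitian := by
    show _ᴴ = _
    rw [my_conjT_eq, Matrix.transpose_mul, Matrix.transpose_mul,
      Matrix.transpose_transpose, hAsymm, Matrix.mul_assoc]
  have hHad := my_hadamard_norm_le SD (X * A * Xᵀ) hSDpsd hXAXt
  have hXt : ‖Xᵀ‖ = ‖X‖ := by rw [← my_conjT_eq]; exact X.l2_opNorm_conjTranspose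
  have hXAX : ‖X * A * Xᵀ‖ ≤ ‖X‖ * ‖A‖ * ‖X‖ := by
    calc ‖X * A * Xᵀ‖ ≤ ‖X * A‖ * ‖Xᵀ‖ := Matrix.l2_opNorm_mul _ _
      _ ≤ (‖X‖ * ‖A‖) * ‖Xᵀ‖ :=
          mul_le_mul_of_nonneg_right (Matrix.l2_opNorm_mul _ _) (norm_nonneg _)
      _ = ‖X‖ * ‖A‖ * ‖X‖ := by rw [hXt]
  have hT2 : ‖Xᵀ * Matrix.hadamard SD (X * A * Xᵀ) * X‖
      ≤ ‖X‖ ^ 2 * (‖SD‖ * (‖X‖ ^ 2 * ‖A‖)) := by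
    calc ‖Xᵀ * Matrix.hadamard SD (X * A * Xᵀ) * X‖
        ≤ ‖Xᵀ * Matrix.hadamard SD (X * A * Xᵀ)‖ * ‖X‖ := Matrix.l2_opNorm_mul _ _
      _ ≤ (‖Xᵀ‖ * ‖Matrix.hadamard SD (X * A * Xᵀ)‖) * ‖X‖ :=
          mul_le_mul_of_nonneg_right (Matrix.l2_opNorm_mul _ _) (norm_nonneg _)
      _ = ‖X‖ * ‖Matrix.hadamard SD (X * A * Xᵀ)‖ * ‖X‖ := by rw [hXt]
      _ ≤ ‖X‖ * (‖SD‖ * ‖X * A * Xᵀ‖) * ‖X‖ := by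
          refine mul_le_mul_of_nonneg_right ?_ (norm_nonneg _)
          exact mul_le_mul_of_nonneg_left hHad (norm_nonneg _)
      _ ≤ ‖X‖ * (‖SD‖ * (‖X‖ * ‖A‖ * ‖X‖)) * ‖X‖ := by
          refine mul_le_mul_of_nonneg_right ?_ (norm_nonneg _)
          refine mul_le_mul_of_nonneg_left ?_ (norm_nonneg _)
          exact mul_le_mul_of_nonneg_left hXAX (norm_nonneg _)
      _ = ‖X‖ ^ 2 * (‖SD‖ * (‖X‖ ^ 2 * ‖A‖)) := by ring
  have hα2' : α * (σ ^ 2 + ‖X‖ ^ 4 * ‖SD‖) < σ := by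
    rw [← specNorm_eq, ← specNorm_eq]
    exact hα2
  rw [specNorm_eq, specNorm_eq]
  have hstep : 0 ≤ σ - α * (σ ^ 2 + ‖X‖ ^ 4 * ‖SD‖) := by linarith
  calc ‖((1 : Matrix (Fin d) (Fin d) ℝ) - α • W) * A
          * ((1 : Matrix (Fin d) (Fin d) ℝ) - α • W)
        + α ^ 2 • (Xᵀ * Matrix.hadamard SD (X * A * Xᵀ) * X)‖
      ≤ ‖((1 : Matrix (Fin d) (Fin d) ℝ) - α • W) * A
          * ((1 : Matrix (Fin d) (Fin d) ℝ) - α • W)‖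
        + ‖α ^ 2 • (Xᵀ * Matrix.hadamard SD (X * A * Xᵀ) * X)‖ := norm_add_le _ _
    _ = ‖((1 : Matrix (Fin d) (Fin d) ℝ) - α • W) * A
          * ((1 : Matrix (Fin d) (Fin d) ℝ) - α • W)‖
        + α ^ 2 * ‖Xᵀ * Matrix.hadamard SD (X * A * Xᵀ) * X‖ := by
        rw [norm_smul, Real.norm_eq_abs, abs_of_nonneg (sq_nonneg α)]
    _ ≤ (1 - α * σ) ^ 2 * ‖A‖ + α ^ 2 * (‖X‖ ^ 2 * (‖SD‖ * (‖X‖ ^ 2 * ‖A‖))) :=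
        add_le_add hcore (mul_le_mul_of_nonneg_left hT2 (sq_nonneg α))
    _ ≤ (1 - α * σ) * ‖A‖ := by
        nlinarith [mul_nonneg (mul_nonneg hα0.le hstep) (norm_nonneg A), norm_nonneg A]
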